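/- arXiv:1307.3881 — 5 statements merged into one kernel-verified Lean document; each statement's English description precedes it below -/
import Mathlib

section
/- Let D be a linearly connected digraph with strong components D_1, ..., D_η, and suppose the component D_i is nontrivial. If a vertex x of D has an m-step prey belonging to V_i for some positive integer m, then: (1) for every integer m' ≥ m, x has an m'-step prey belonging to V_i; and (2) every vertex of V_i is a k-step prey of x for some positive integer k. -/
/-- A digraph: a finite vertex type with an irreflexive arc relation (no loops). -/
structure Digraph' (V : Type*) where
  Adj : V → V → Prop
  irrefl : ∀ v, ¬ Adj v v

namespace Digraph'

variable {V : Type*}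

/-- There is a directed walk of length `m` from `x` to `y` in `D`;
i.e. `y` is an `m`-step prey of `x`. -/
def HasWalk (D : Digraph' V) (m : ℕ) (x y : V) : Prop :=
  ∃ f : ℕ → V, f 0 = x ∧ f m = y ∧ ∀ t, t < m → D.Adj (f t) (f (t + 1))

/-- There is a directed walk of length `m` from `x` to `y` staying inside `S`. -/
def HasWalkIn (D : Digraph' V) (S : Set V) (m : ℕ) (x y : V) : Prop :=
  ∃ f : ℕ → V, f 0 = x ∧ f m = y ∧ (∀ t, t ≤ m → f t ∈ S) ∧
    ∀ t, t < m → D.Adj (f t) (f (t + 1))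

/-- The `m`-step competition graph `C(D^m)` of `D`. -/
def compGraph (D : Digraph' V) (m : ℕ) : SimpleGraph V where
  Adj u v := u ≠ v ∧ ∃ z, D.HasWalk m u z ∧ D.HasWalk m v z
  symm := by
    constructor
    rintro u v ⟨hne, z, h1, h2⟩
    exact ⟨hne.symm, z, h2, h1⟩
  loopless := ⟨fun v h => h.1 rfl⟩

/-- The sequence `{C(D^m)}_{m ≥ 1}` converges. -/
def CompConverges (D : Digraph' V) : Prop :=
  ∃ N : ℕ, 1 ≤ N ∧ ∀ m, N ≤ m → D.compGraph m = D.compGraph N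

/-- The sequence `{C(D^m)}_{m ≥ 1}` converges to the graph `G`. -/
def CompConvergesTo (D : Digraph' V) (G : SimpleGraph V) : Prop :=
  ∃ N : ℕ, 1 ≤ N ∧ ∀ m, N ≤ m → D.compGraph m = G

/-- `D` is linearly connected with strong components `Vset 1, …, Vset η`. -/
structure IsLinConn (D : Digraph' V) (η : ℕ) (Vset : ℕ → Set V) : Prop where
  nonempty : ∀ i, 1 ≤ i → i ≤ η → (Vset i).Nonempty
  cover : ∀ v : V, ∃ i, 1 ≤ i ∧ i ≤ η ∧ v ∈ Vset i
  disjoint' : ∀ i j, 1 ≤ i → i ≤ η → 1 ≤ j → j ≤ η →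
      ∀ v : V, v ∈ Vset i → v ∈ Vset j → i = j
  strong : ∀ i, 1 ≤ i → i ≤ η → ∀ x ∈ Vset i, ∀ y ∈ Vset i,
      ∃ m, D.HasWalkIn (Vset i) m x y
  arcs : ∀ x y : V, D.Adj x y → ∃ i, 1 ≤ i ∧
      ((i ≤ η ∧ x ∈ Vset i ∧ y ∈ Vset i) ∨
       (i + 1 ≤ η ∧ x ∈ Vset i ∧ y ∈ Vset (i + 1)))
  linked : ∀ i, 1 ≤ i → i + 1 ≤ η → ∃ x ∈ Vset i, ∃ y ∈ Vset (i + 1), D.Adj x y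

/-- A component with vertex set `S` is trivial if `S` is a singleton. -/
def IsTrivialComp (S : Set V) : Prop := ∃ v : V, S = {v}

/-- `κ` is the index of imprimitivity of the (strong) component with vertex set `S`:
the gcd of the lengths of all closed directed walks inside `S`. -/
def IsImprimIndex (D : Digraph' V) (S : Set V) (κ : ℕ) : Prop :=
  (∀ (x : V) (m : ℕ), x ∈ S → 0 < m → D.HasWalkIn S m x x → κ ∣ m) ∧
  ∀ d : ℕ, (∀ (x : V) (m : ℕ), x ∈ S → 0 < m → D.HasWalkIn S m x x → d ∣ m) → d ∣ κ

/-- `u` is an imprimitivity labelling on `S`: along any arc inside `S` the label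
increases by one.  Its fibers are the sets of imprimitivity. -/
def IsImprimLabelling (D : Digraph' V) (S : Set V) {κ : ℕ} (u : V → ZMod κ) : Prop :=
  ∀ x ∈ S, ∀ y ∈ S, D.Adj x y → u y = u x + 1

/-- `(k, l) ∈ I(D_{p,p+1})`: some arc goes from a vertex of `U_k^{(p)}` to a vertex of
`U_l^{(p+1)}`. -/
def InI (D : Digraph' V) (Vset : ℕ → Set V) {κ : ℕ → ℕ}
    (u : ∀ i : ℕ, V → ZMod (κ i)) (p : ℕ) (k : ZMod (κ p)) (l : ZMod (κ (p + 1))) : Prop :=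
  ∃ x ∈ Vset p, ∃ y ∈ Vset (p + 1), D.Adj x y ∧ u p x = k ∧ u (p + 1) y = l

/-- `(i, j)` is an edge of the bipartite graph `B_{p,p+1}`. -/
def BAdj (D : Digraph' V) (Vset : ℕ → Set V) {κ : ℕ → ℕ}
    (u : ∀ i : ℕ, V → ZMod (κ i)) (p : ℕ) (i : ZMod (κ p)) (j : ZMod (κ (p + 1))) : Prop :=
  ∃ (k : ZMod (κ p)) (l : ZMod (κ (p + 1))) (a : ℤ),
    InI D Vset u p k l ∧ i = k + 1 + (a : ZMod (κ p)) ∧ j = l + (a : ZMod (κ (p + 1)))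

/-- The competition skeleton graph (CS-graph) `PT_D^{(η)}`: vertices are pairs `⟨r, i⟩`
with `i ∈ ZMod (κ r)` (only `1 ≤ r ≤ η` carries edges); `⟨p, i⟩` and `⟨p+1, j⟩` are
adjacent exactly when `i` and `j` are adjacent in `B_{p,p+1}`. -/
def csGraph (D : Digraph' V) (Vset : ℕ → Set V) {κ : ℕ → ℕ}
    (u : ∀ i : ℕ, V → ZMod (κ i)) (η : ℕ) : SimpleGraph ((r : ℕ) × ZMod (κ r)) where
  Adj a b := ∃ p, 1 ≤ p ∧ p + 1 ≤ η ∧ ∃ (i : ZMod (κ p)) (j : ZMod (κ (p + 1))),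
    BAdj D Vset u p i j ∧
    ((a = ⟨p, i⟩ ∧ b = ⟨p + 1, j⟩) ∨ (a = ⟨p + 1, j⟩ ∧ b = ⟨p, i⟩))
  symm := by
    constructor
    rintro a b ⟨p, h1, h2, i, j, hB, hab⟩
    exact ⟨p, h1, h2, i, j, hB,
      hab.elim (fun h => Or.inr ⟨h.2, h.1⟩) (fun h => Or.inl ⟨h.2, h.1⟩)⟩
  loopless := by
    constructor
    rintro a ⟨p, _, _, i, j, _, hab⟩
    rcases hab with ⟨ha, hb⟩ | ⟨ha, hb⟩
    · have h : p = p + 1 := congrArg Sigma.fst (ha.symm.trans hb)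
      omega
    · have h : p + 1 = p := congrArg Sigma.fst (ha.symm.trans hb)
      omega

end Digraph'

namespace Digraph'

lemma hasWalk_trans {V : Type*} (D : Digraph' V) {m n : ℕ} {x y w : V}
    (h1 : D.HasWalk m x y) (h2 : D.HasWalk n y w) : D.HasWalk (m + n) x w := by
  obtain ⟨f, hf0, hfm, hfadj⟩ := h1
  obtain ⟨g, hg0, hgn, hgadj⟩ := h2
  refine ⟨fun t => if t < m then f t else g (t - m), ?_, ?_, ?_⟩
  · by_cases h : 0 < m
    · simp [h, hf0]
    · have hm0 : m = 0 := by omega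
      subst hm0
      simp [hg0, ← hfm, hf0]
  · simp only [show ¬ (m + n < m) by omega, if_false]
    simpa using hgn
  · intro t ht
    by_cases h1' : t + 1 < m
    · simp only [show t < m by omega, h1', if_true]
      exact hfadj t (by omega)
    · by_cases h2' : t < m
      · have : t + 1 = m := by omega
        simp only [h2', h1', if_true, if_false, this]
        simp only [Nat.sub_self, lt_irrefl, if_false, hg0, ← hfm]
        rw [← this]
        exact hfadj t (by omega)
      · simp only [h2', h1', if_false]
        rw [show t + 1 - m = t - m + 1 by omega]
        exact hgadj (t - m) (by omega)

lemma hasWalkIn_hasWalk {V : Type*} (D : Digraph' V) {S : Set V} {m : ℕ} {x y : V}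
    (h : D.HasWalkIn S m x y) : D.HasWalk m x y := by
  obtain ⟨f, h0, hm, _, hadj⟩ := h
  exact ⟨f, h0, hm, hadj⟩

lemma hasWalk_succ {V : Type*} (D : Digraph' V) {m : ℕ} {x y z : V}
    (h : D.HasWalk m x y) (hadj : D.Adj y z) : D.HasWalk (m + 1) x z :=
  D.hasWalk_trans h ⟨fun t => if t = 0 then y else z, by simp, by simp,
    fun t ht => by simp [show t = 0 by omega]; exact hadj⟩

end Digraph'

open Digraph' in
/-- if `x` has an `m`-step prey in the nontrivial strong component `D_i`,
then `x` has an `m'`-step prey in `D_i` for every `m' ≥ m`, and every vertex of `D_i`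
is a `k`-step prey of `x` for some positive `k`. -/
theorem stmt0 {V : Type*} [Fintype V] (D : Digraph' V) (η : ℕ) (Vset : ℕ → Set V)
    (hD : D.IsLinConn η Vset) (i : ℕ) (hi1 : 1 ≤ i) (hiη : i ≤ η)
    (hnt : ¬ IsTrivialComp (Vset i))
    (x y : V) (m : ℕ) (hm : 1 ≤ m) (hy : y ∈ Vset i) (hw : D.HasWalk m x y) :
    (∀ m', m ≤ m' → ∃ y' ∈ Vset i, D.HasWalk m' x y') ∧
    (∀ w ∈ Vset i, ∃ k, 1 ≤ k ∧ D.HasWalk k x w) := by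
  -- every vertex of the nontrivial strong component has an out-neighbor inside it
  have hout : ∀ v ∈ Vset i, ∃ z ∈ Vset i, D.Adj v z := by
    intro v hv
    have : ∃ z ∈ Vset i, z ≠ v := by
      by_contra h
      push_neg at h
      exact hnt ⟨v, Set.eq_singleton_iff_unique_mem.2 ⟨hv, fun z hz => h z hz⟩⟩
    obtain ⟨z, hz, hzv⟩ := this
    obtain ⟨n, f, hf0, hfn, hfS, hfadj⟩ := hD.strong i hi1 hiη v hv z hz
    have hn : 0 < n := by
      rcases Nat.eq_zero_or_pos n with h | h
      · subst h; exact absurd (hfn ▸ hf0) hzv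
      · exact h
    exact ⟨f 1, hfS 1 (by omega), hf0 ▸ hfadj 0 hn⟩
  constructor
  · intro m' hm'
    induction m' with
    | zero => exact absurd (hm.trans hm') (by omega)
    | succ n ih =>
      rcases Nat.lt_or_ge m (n + 1) with h | h
      · obtain ⟨y', hy', hw'⟩ := ih (by omega)
        obtain ⟨z, hz, hadj⟩ := hout y' hy'
        exact ⟨z, hz, D.hasWalk_succ hw' hadj⟩
      · have : m = n + 1 := by omega
        exact ⟨y, hy, this ▸ hw⟩
  · intro w hw'
    obtain ⟨n, hwalk⟩ := hD.strong i hi1 hiη y hy w hw'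
    exact ⟨m + n, by omega, D.hasWalk_trans hw (D.hasWalkIn_hasWalk hwalk)⟩
end

section
/- Let D be a linearly connected digraph with strong components D_1, ..., D_η. If two distinct vertices x and y of D have a common m-step prey belonging to a nontrivial strong component for some positive integer m, then there exists a positive integer N such that x and y are adjacent in C(D^{m'}) for every integer m' ≥ N. -/
open Digraph' in
/-- if distinct vertices `x` and `y` have a common `m`-step prey in a
nontrivial strong component then they are adjacent in `C(D^{m'})` for all `m' ≥ N`. -/
theorem stmt1 {V : Type*} [Fintype V] (D : Digraph' V) (η : ℕ) (Vset : ℕ → Set V)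
    (hD : D.IsLinConn η Vset) (i : ℕ) (hi1 : 1 ≤ i) (hiη : i ≤ η)
    (hnt : ¬ IsTrivialComp (Vset i))
    (x y z : V) (hxy : x ≠ y) (m : ℕ) (hm : 1 ≤ m) (hz : z ∈ Vset i)
    (hwx : D.HasWalk m x z) (hwy : D.HasWalk m y z) :
    ∃ N : ℕ, 1 ≤ N ∧ ∀ m', N ≤ m' → (D.compGraph m').Adj x y := by
  classical
  -- every vertex of the nontrivial strong component has an out-neighbor inside it
  have key : ∀ v : V, v ∈ Vset i → ∃ w, w ∈ Vset i ∧ D.Adj v w := by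
    intro v hv
    have hne : ∃ w ∈ Vset i, w ≠ v := by
      by_contra h
      push_neg at h
      exact hnt ⟨v, Set.eq_singleton_iff_unique_mem.2 ⟨hv, h⟩⟩
    obtain ⟨w, hw, hwv⟩ := hne
    obtain ⟨m0, f, hf0, hfm, hfin, hadj⟩ := hD.strong i hi1 hiη v hv w hw
    have hm0 : 0 < m0 := by
      rcases Nat.eq_zero_or_pos m0 with h | h
      · exfalso; subst h; exact hwv (hfm.symm.trans hf0)
      · exact h
    exact ⟨f 1, hfin 1 hm0, hf0 ▸ hadj 0 hm0⟩
  -- an infinite walk starting at z inside Vset i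
  let g : ℕ → V := fun n => Nat.rec z (fun _ v =>
    if h : v ∈ Vset i then Classical.choose (key v h) else v) n
  have hg0 : g 0 = z := rfl
  have hgmem : ∀ n, g n ∈ Vset i := by
    intro n
    induction n with
    | zero => exact hz
    | succ n ih =>
      show (if h : g n ∈ Vset i then Classical.choose (key (g n) h) else g n) ∈ Vset i
      rw [dif_pos ih]
      exact (Classical.choose_spec (key (g n) ih)).1
  have hgadj : ∀ n, D.Adj (g n) (g (n + 1)) := by
    intro n
    show D.Adj (g n) (if h : g n ∈ Vset i then Classical.choose (key (g n) h) else g n)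
    rw [dif_pos (hgmem n)]
    exact (Classical.choose_spec (key (g n) (hgmem n))).2
  refine ⟨m, hm, fun m' hm' => ?_⟩
  have ext : ∀ w : V, D.HasWalk m w z → D.HasWalk m' w (g (m' - m)) := by
    intro w hw
    obtain ⟨f, hf0, hfm, hadj⟩ := hw
    refine ⟨fun n => if n < m then f n else g (n - m), ?_, ?_, ?_⟩
    · simp only [if_pos (by omega : 0 < m), hf0]
    · simp only [if_neg (by omega : ¬ m' < m)]
    · intro t ht
      by_cases h1 : t + 1 < m
      · simp only [if_pos (by omega : t < m), if_pos h1]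
        exact hadj t (by omega)
      · by_cases h2 : t < m
        · have htm : t + 1 = m := by omega
          simp only [if_pos h2, if_neg (by omega : ¬ t + 1 < m), htm, Nat.sub_self, hg0, hfm, ite_self]
          have := hadj t h2
          rwa [htm, hfm] at this
        · simp only [if_neg h2, if_neg (by omega : ¬ t + 1 < m)]
          have : t + 1 - m = (t - m) + 1 := by omega
          rw [this]
          exact hgadj (t - m)
  exact ⟨hxy, g (m' - m), ext x hwx, ext y hwy⟩
end

section
/- Let D be a linearly connected digraph with exactly two strong components D_1 and D_2, both nontrivial. Fix i ∈ ZMod κ_1 and j ∈ ZMod κ_2. Then (i, j) is an edge of the bipartite graph B_{1,2} if and only if for every x ∈ U_i^{(1)} and every y ∈ U_j^{(2)} there exists a positive integer N such that, for every integer t ≥ N, D has a directed (x,y)-walk of length 2tκ_1κ_2. -/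
namespace Digraph'

variable {V : Type*}

lemma nt_key (A : Set ℕ) (hadd : ∀ a ∈ A, ∀ b ∈ A, a + b ∈ A) (κ : ℕ) (hκpos : 0 < κ)
    (hdvd : ∀ a ∈ A, κ ∣ a) (hgcd : ∀ d : ℕ, (∀ a ∈ A, d ∣ a) → d ∣ κ) :
    ∃ M, ∀ m, M ≤ m → κ ∣ m → m ∈ A := by
  classical
  set B : Set ℕ := A ∪ {0} with hBdef
  have hB_add : ∀ a ∈ B, ∀ b ∈ B, a + b ∈ B := by
    rintro a (ha | ha) b (hb | hb)
    · exact Or.inl (hadd a ha b hb)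
    · simp only [Set.mem_singleton_iff] at hb; subst hb; exact Or.inl ha
    · simp only [Set.mem_singleton_iff] at ha; subst ha; rw [Nat.zero_add]; exact Or.inl hb
    · simp only [Set.mem_singleton_iff] at ha hb; subst ha; subst hb; exact Or.inr rfl
  have hB_mul : ∀ (c : ℕ), ∀ b ∈ B, c * b ∈ B := by
    intro c
    induction c with
    | zero => intro b _; exact Or.inr (by simp)
    | succ n ih =>
      intro b hb
      have := hB_add _ (ih b hb) _ hb
      rwa [show n * b + b = (n + 1) * b by ring] at this
  have hBk : ∀ b ∈ B, κ ∣ b := by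
    rintro b (hb | hb)
    · exact hdvd b hb
    · simp only [Set.mem_singleton_iff] at hb; subst hb; exact dvd_zero κ
  -- the subgroup of ℤ generated by A
  obtain ⟨g, hg⟩ := Int.subgroup_cyclic (AddSubgroup.closure ((fun n : ℕ => (n : ℤ)) '' A))
  have hgA : ∀ a ∈ A, g ∣ (a : ℤ) := by
    intro a ha
    have h1 : (a : ℤ) ∈ AddSubgroup.closure ((fun n : ℕ => (n : ℤ)) '' A) :=
      AddSubgroup.subset_closure ⟨a, ha, rfl⟩
    rw [hg, AddSubgroup.mem_closure_singleton] at h1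
    obtain ⟨n, hn⟩ := h1
    exact ⟨n, by rw [← hn]; rw [smul_eq_mul]; ring⟩
  have h1 : g.natAbs ∣ κ := by
    apply hgcd
    intro a ha
    exact Int.natCast_dvd_natCast.mp (Int.natAbs_dvd.mpr (hgA a ha))
  have h2 : κ ∣ g.natAbs := by
    have hsub : AddSubgroup.closure ((fun n : ℕ => (n : ℤ)) '' A) ≤
        AddSubgroup.closure {(κ : ℤ)} := by
      rw [AddSubgroup.closure_le]
      rintro z ⟨a, ha, rfl⟩
      rw [SetLike.mem_coe, AddSubgroup.mem_closure_singleton]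
      obtain ⟨c, hc⟩ := hdvd a ha
      exact ⟨c, by rw [smul_eq_mul]; push_cast [hc]; ring⟩
    have hgH : g ∈ AddSubgroup.closure ((fun n : ℕ => (n : ℤ)) '' A) := by
      rw [hg]; exact AddSubgroup.subset_closure rfl
    have := hsub hgH
    rw [AddSubgroup.mem_closure_singleton] at this
    obtain ⟨n, hn⟩ := this
    have : (κ : ℤ) ∣ g := ⟨n, by rw [← hn]; rw [smul_eq_mul]; ring⟩
    have := Int.natAbs_dvd_natAbs.mpr this
    simpa using this
  have hgκ : g.natAbs = κ := Nat.dvd_antisymm h1 h2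
  have hκH : (κ : ℤ) ∈ AddSubgroup.closure ((fun n : ℕ => (n : ℤ)) '' A) := by
    have hgH : g ∈ AddSubgroup.closure ((fun n : ℕ => (n : ℤ)) '' A) := by
      rw [hg]; exact AddSubgroup.subset_closure rfl
    rcases Int.natAbs_eq g with h | h
    · rw [← hgκ, ← h]; exact hgH
    · rw [← hgκ]
      have h2' := AddSubgroup.neg_mem _ hgH
      have : (↑g.natAbs : ℤ) = -g := by omega
      rw [this]; exact h2'
  have key : ∃ p ∈ B, ∃ q ∈ B, (κ : ℤ) = (p : ℤ) - (q : ℤ) := by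
    refine AddSubgroup.closure_induction ?_ ?_ ?_ ?_ hκH
    · rintro z ⟨a, ha, rfl⟩
      exact ⟨a, Or.inl ha, 0, Or.inr rfl, by push_cast; ring⟩
    · exact ⟨0, Or.inr rfl, 0, Or.inr rfl, by simp⟩
    · rintro z w hz hw ⟨p1, hp1, q1, hq1, he1⟩ ⟨p2, hp2, q2, hq2, he2⟩
      exact ⟨p1 + p2, hB_add _ hp1 _ hp2, q1 + q2, hB_add _ hq1 _ hq2, by
        push_cast; rw [he1, he2]; ring⟩
    · rintro z hz ⟨p, hp, q, hq, he⟩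
      exact ⟨q, hq, p, hp, by rw [he]; ring⟩
  obtain ⟨p, hp, q, hq, hpq⟩ := key
  have hpq' : p = q + κ := by omega
  obtain ⟨s, hqs⟩ := hBk q hq
  refine ⟨κ * s * s + 1, ?_⟩
  intro m hm hκm
  obtain ⟨t, rfl⟩ := hκm
  rcases Nat.eq_zero_or_pos s with hs | hs
  · -- q = 0, p = κ
    subst hs
    have hq0 : q = 0 := by omega
    have hpκ : p = κ := by omega
    have := hB_mul t p hp
    rw [hpκ] at this
    have hmem : κ * t ∈ B := by rwa [Nat.mul_comm] at this
    rcases hmem with h | h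
    · exact h
    · simp only [Set.mem_singleton_iff] at h; omega
  · have hts : κ * (s * s) < κ * t := by
      calc κ * (s * s) = κ * s * s := by ring
        _ < κ * t := by omega
    have htss : s * s < t := Nat.lt_of_mul_lt_mul_left hts
    set qq := t / s with hqq
    set r := t % s with hr
    have hdm : s * qq + r = t := Nat.div_add_mod t s
    have hrs : r < s := Nat.mod_lt t hs
    have hsqq : s ≤ qq := (Nat.le_div_iff_mul_le hs).mpr (by nlinarith)
    obtain ⟨d, hd⟩ : ∃ d, qq = d + r := ⟨qq - r, by omega⟩
    have hmem : d * q + r * p ∈ B := hB_add _ (hB_mul d q hq) _ (hB_mul r p hp)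
    have heq : d * q + r * p = κ * t := by
      rw [hpq', hqs, ← hdm, hd]; ring
    rw [heq] at hmem
    rcases hmem with h | h
    · exact h
    · simp only [Set.mem_singleton_iff] at h; omega

section Aux

variable {D : Digraph' V} {S : Set V}

lemma HasWalkIn.append {m n : ℕ} {x y z : V}
    (h1 : D.HasWalkIn S m x y) (h2 : D.HasWalkIn S n y z) :
    D.HasWalkIn S (m + n) x z := by
  obtain ⟨f, hf0, hfm, hfS, hfadj⟩ := h1
  obtain ⟨g, hg0, hgn, hgS, hgadj⟩ := h2
  refine ⟨fun t => if t < m then f t else g (t - m), ?_, ?_, ?_, ?_⟩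
  · rcases Nat.eq_zero_or_pos m with hm | hm
    · subst hm
      simp only [Nat.lt_irrefl, if_false, Nat.sub_zero]
      rw [hg0, ← hfm, hf0]
    · simp [hm, hf0]
  · have h : ¬ (m + n < m) := by omega
    simp only [h, if_false]
    rw [show m + n - m = n from by omega, hgn]
  · intro t ht
    by_cases h : t < m
    · simp only [h, if_true]; exact hfS t (le_of_lt h)
    · simp only [h, if_false]; exact hgS (t - m) (by omega)
  · intro t ht
    rcases lt_trichotomy (t + 1) m with h | h | h
    · have h' : t < m := by omega
      simp only [h, h', if_true]
      exact hfadj t (by omega)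
    · have h' : t < m := by omega
      have h'' : ¬ (t + 1 < m) := by omega
      simp only [h', h'', if_true, if_false]
      have : g (t + 1 - m) = f m := by
        rw [show t + 1 - m = 0 from by omega, hg0, ← hfm]
      rw [this, ← h]
      exact hfadj t (by omega)
    · have h1 : ¬ (t < m) := by omega
      have h2 : ¬ (t + 1 < m) := by omega
      simp only [h1, h2, if_false]
      rw [show t + 1 - m = (t - m) + 1 from by omega]
      exact hgadj (t - m) (by omega)

lemma HasWalkIn.hasWalk {m : ℕ} {x y : V} (h : D.HasWalkIn S m x y) :
    D.HasWalk m x y := by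
  obtain ⟨f, h0, hm, _, hadj⟩ := h
  exact ⟨f, h0, hm, hadj⟩

lemma hasWalk_iff_univ {m : ℕ} {x y : V} :
    D.HasWalk m x y ↔ D.HasWalkIn Set.univ m x y := by
  constructor
  · rintro ⟨f, h0, hm, hadj⟩
    exact ⟨f, h0, hm, fun _ _ => Set.mem_univ _, hadj⟩
  · exact HasWalkIn.hasWalk

lemma HasWalk.append {m n : ℕ} {x y z : V}
    (h1 : D.HasWalk m x y) (h2 : D.HasWalk n y z) : D.HasWalk (m + n) x z := by
  rw [hasWalk_iff_univ] at *
  exact h1.append h2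

lemma Adj.hasWalk {x y : V} (h : D.Adj x y) : D.HasWalk 1 x y := by
  refine ⟨fun t => if t = 0 then x else y, by simp, by simp, ?_⟩
  intro t ht
  have : t = 0 := by omega
  subst this
  simpa using h

lemma label_of_walkIn {κ : ℕ} {u : V → ZMod κ} (hu : D.IsImprimLabelling S u)
    {m : ℕ} {x y : V} (h : D.HasWalkIn S m x y) : u y = u x + (m : ZMod κ) := by
  obtain ⟨f, hf0, hfm, hfS, hfadj⟩ := h
  have key : ∀ t, t ≤ m → u (f t) = u (f 0) + (t : ZMod κ) := by
    intro t
    induction t with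
    | zero => intro _; simp
    | succ n ih =>
      intro h
      rw [hu (f n) (hfS n (by omega)) (f (n + 1)) (hfS (n + 1) h) (hfadj n (by omega)),
        ih (by omega)]
      push_cast; ring
  rw [← hf0, ← hfm]
  exact key m le_rfl

lemma exists_closed_walk (hne : S.Nonempty) (hnt : ¬ IsTrivialComp S)
    (hstrong : ∀ x ∈ S, ∀ y ∈ S, ∃ m, D.HasWalkIn S m x y) :
    ∃ x ∈ S, ∃ ℓ, 0 < ℓ ∧ D.HasWalkIn S ℓ x x := by
  obtain ⟨a, ha⟩ := hne
  have : ∃ b ∈ S, b ≠ a := by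
    by_contra h
    push_neg at h
    exact hnt ⟨a, Set.eq_singleton_iff_unique_mem.mpr ⟨ha, h⟩⟩
  obtain ⟨b, hb, hba⟩ := this
  obtain ⟨m1, hw1⟩ := hstrong a ha b hb
  obtain ⟨m2, hw2⟩ := hstrong b hb a ha
  refine ⟨a, ha, m1 + m2, ?_, hw1.append hw2⟩
  rcases Nat.eq_zero_or_pos m1 with h | h
  · subst h
    obtain ⟨f, h0, hm, _, _⟩ := hw1
    exact absurd (h0.symm.trans hm) hba.symm
  · omega

lemma kappa_pos {κ : ℕ} (hind : D.IsImprimIndex S κ)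
    (hclosed : ∃ x ∈ S, ∃ ℓ, 0 < ℓ ∧ D.HasWalkIn S ℓ x x) : 0 < κ := by
  obtain ⟨x, hx, ℓ, hℓ, hw⟩ := hclosed
  have := hind.1 x ℓ hx hℓ hw
  rcases Nat.eq_zero_or_pos κ with h | h
  · subst h
    exact absurd (Nat.eq_zero_of_zero_dvd this) (by omega)
  · exact h

lemma walkIn_prefix {m : ℕ} {x : V} {f : ℕ → V}
    (hf0 : f 0 = x) (hfS : ∀ t ≤ m, f t ∈ S) (hfadj : ∀ t < m, D.Adj (f t) (f (t + 1)))
    {t : ℕ} (ht : t ≤ m) : D.HasWalkIn S t x (f t) :=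
  ⟨f, hf0, rfl, fun s hs => hfS s (le_trans hs ht), fun s hs => hfadj s (by omega)⟩

lemma fiber_nonempty {κ : ℕ} {u : V → ZMod κ} (hne : S.Nonempty)
    (hnt : ¬ IsTrivialComp S)
    (hstrong : ∀ x ∈ S, ∀ y ∈ S, ∃ m, D.HasWalkIn S m x y)
    (hind : D.IsImprimIndex S κ) (hu : D.IsImprimLabelling S u) (r : ZMod κ) :
    ∃ z ∈ S, u z = r := by
  obtain ⟨x, hx, ℓ, hℓ, hw⟩ := exists_closed_walk hne hnt hstrong
  have hκ : 0 < κ := kappa_pos hind ⟨x, hx, ℓ, hℓ, hw⟩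
  haveI : NeZero κ := ⟨by omega⟩
  have hκℓ : κ ∣ ℓ := hind.1 x ℓ hx hℓ hw
  have hκleℓ : κ ≤ ℓ := Nat.le_of_dvd hℓ hκℓ
  obtain ⟨f, hf0, hfm, hfS, hfadj⟩ := hw
  set t := (r - u x).val with htdef
  have htℓ : t ≤ ℓ := by
    have := ZMod.val_lt (r - u x)
    omega
  have hwt : D.HasWalkIn S t x (f t) := walkIn_prefix hf0 hfS hfadj htℓ
  refine ⟨f t, hfS t htℓ, ?_⟩
  have h1 := label_of_walkIn hu hwt
  rw [h1, htdef]
  rw [ZMod.natCast_val, ZMod.cast_id]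
  ring

lemma exists_walkIn_all_large {κ : ℕ} {u : V → ZMod κ}
    (hstrong : ∀ x ∈ S, ∀ y ∈ S, ∃ m, D.HasWalkIn S m x y)
    (hind : D.IsImprimIndex S κ) (hκ : 0 < κ)
    (hu : D.IsImprimLabelling S u)
    {x y : V} (hx : x ∈ S) (hy : y ∈ S) :
    ∃ M : ℕ, ∀ m : ℕ, M ≤ m → (m : ZMod κ) = u y - u x → D.HasWalkIn S m x y := by
  set A : Set ℕ := {ℓ | 0 < ℓ ∧ D.HasWalkIn S ℓ x x} with hAdef
  have hadd : ∀ a ∈ A, ∀ b ∈ A, a + b ∈ A := by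
    rintro a ⟨ha1, ha2⟩ b ⟨hb1, hb2⟩
    exact ⟨by omega, ha2.append hb2⟩
  have hdvdA : ∀ a ∈ A, κ ∣ a := by
    rintro a ⟨ha1, ha2⟩
    exact hind.1 x a hx ha1 ha2
  have hgcdA : ∀ d : ℕ, (∀ a ∈ A, d ∣ a) → d ∣ κ := by
    intro d hd
    apply hind.2
    intro z ℓ hz hℓ hwz
    obtain ⟨α, hα⟩ := hstrong x hx z hz
    obtain ⟨β, hβ⟩ := hstrong z hz x hx
    have hw1 : α + ℓ + β ∈ A := ⟨by omega, (hα.append hwz).append hβ⟩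
    have hw2 : α + (ℓ + ℓ) + β ∈ A := ⟨by omega, (hα.append (hwz.append hwz)).append hβ⟩
    have h1 := hd _ hw1
    have h2 := hd _ hw2
    have h3 : d ∣ (α + (ℓ + ℓ) + β) - (α + ℓ + β) := Nat.dvd_sub h2 h1
    rwa [show (α + (ℓ + ℓ) + β) - (α + ℓ + β) = ℓ from by omega] at h3
  obtain ⟨M₀, hM₀⟩ := nt_key A hadd κ hκ hdvdA hgcdA
  obtain ⟨c, hc⟩ := hstrong x hx y hy
  refine ⟨M₀ + c + 1, ?_⟩
  intro m hm hres
  have hcres : (c : ZMod κ) = u y - u x := by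
    rw [label_of_walkIn hu hc]; ring
  have hmc : κ ∣ m - c := by
    rw [← ZMod.natCast_eq_zero_iff]
    push_cast [Nat.cast_sub (show c ≤ m from by omega)]
    rw [hres, hcres]
    ring
  have hmem : m - c ∈ A := hM₀ (m - c) (by omega) hmc
  have hw : D.HasWalkIn S ((m - c) + c) x y := hmem.2.append hc
  rwa [Nat.sub_add_cancel (show c ≤ m from by omega)] at hw

lemma walk_decomp {Vset : ℕ → Set V} (hD : D.IsLinConn 2 Vset) {m : ℕ} {x y : V}
    (hx : x ∈ Vset 1) (hy : y ∈ Vset 2) (h : D.HasWalk m x y) :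
    ∃ m1 x' y' m2, m = m1 + 1 + m2 ∧ x' ∈ Vset 1 ∧ y' ∈ Vset 2 ∧
      D.HasWalkIn (Vset 1) m1 x x' ∧ D.Adj x' y' ∧ D.HasWalkIn (Vset 2) m2 y' y := by
  classical
  obtain ⟨f, hf0, hfm, hadj⟩ := h
  have hdisj : ∀ v, v ∈ Vset 1 → v ∈ Vset 2 → False := by
    intro v h1 h2
    have := hD.disjoint' 1 2 (by norm_num) (by norm_num) (by norm_num) (by norm_num) v h1 h2
    omega
  have hcover : ∀ v : V, v ∈ Vset 1 ∨ v ∈ Vset 2 := by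
    intro v
    obtain ⟨i, h1, h2, h3⟩ := hD.cover v
    interval_cases i
    · exact Or.inl h3
    · exact Or.inr h3
  have harc : ∀ a b, D.Adj a b →
      (a ∈ Vset 1 ∧ b ∈ Vset 1) ∨ (a ∈ Vset 2 ∧ b ∈ Vset 2) ∨
      (a ∈ Vset 1 ∧ b ∈ Vset 2) := by
    intro a b hab
    obtain ⟨i, h1, h2⟩ := hD.arcs a b hab
    rcases h2 with ⟨hi, ha, hb⟩ | ⟨hi, ha, hb⟩
    · interval_cases i
      · exact Or.inl ⟨ha, hb⟩
      · exact Or.inr (Or.inl ⟨ha, hb⟩)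
    · have hieq : i = 1 := by omega
      subst hieq
      exact Or.inr (Or.inr ⟨ha, hb⟩)
  have hex : ∃ t, f t ∈ Vset 2 := ⟨m, hfm ▸ hy⟩
  set T := Nat.find hex with hTdef
  have hTspec : f T ∈ Vset 2 := Nat.find_spec hex
  have hTle : T ≤ m := Nat.find_le (hfm ▸ hy)
  have hT1 : ∀ t, t < T → f t ∈ Vset 1 := by
    intro t ht
    exact (hcover (f t)).resolve_right (Nat.find_min hex ht)
  have hTpos : 0 < T := by
    rcases Nat.eq_zero_or_pos T with h | h
    · exact absurd (hdisj (f 0) (by rw [hf0]; exact hx) (by rw [← h]; exact hTspec)) (by simp)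
    · exact h
  have hxT : f (T - 1) ∈ Vset 1 := hT1 (T - 1) (by omega)
  have hAdjT : D.Adj (f (T - 1)) (f T) := by
    have h := hadj (T - 1) (by omega)
    rwa [show T - 1 + 1 = T from by omega] at h
  have hstay : ∀ t, t ≤ m - T → f (T + t) ∈ Vset 2 := by
    intro t
    induction t with
    | zero => intro _; simpa using hTspec
    | succ n ih =>
      intro hn
      have h1 := ih (by omega)
      have h2 := hadj (T + n) (by omega)
      rcases harc _ _ h2 with ⟨ha, _⟩ | ⟨_, hb⟩ | ⟨ha, _⟩
      · exact absurd (hdisj _ ha h1) (by simp)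
      · rwa [show T + (n + 1) = T + n + 1 from by omega]
      · exact absurd (hdisj _ ha h1) (by simp)
  refine ⟨T - 1, f (T - 1), f T, m - T, by omega, hxT, hTspec, ?_, hAdjT, ?_⟩
  · exact ⟨f, hf0, rfl, fun t ht => hT1 t (by omega), fun t ht => hadj t (by omega)⟩
  · refine ⟨fun t => f (T + t), by simp, ?_, hstay, ?_⟩
    · show f (T + (m - T)) = y
      rw [show T + (m - T) = m from by omega, hfm]
    · intro t ht
      have := hadj (T + t) (by omega)
      rwa [show T + t + 1 = T + (t + 1) from by omega] at this


end Aux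

end Digraph'


open Digraph' in
/-- `(i,j)` is an edge of `B_{1,2}` iff for every `x ∈ U_i^{(1)}` and
`y ∈ U_j^{(2)}` there are directed `(x,y)`-walks of length `2tκ₁κ₂` for all large `t`. -/
theorem stmt4 {V : Type*} [Fintype V] (D : Digraph' V) (Vset : ℕ → Set V)
    (hD : D.IsLinConn 2 Vset)
    (h1 : ¬ IsTrivialComp (Vset 1)) (h2 : ¬ IsTrivialComp (Vset 2))
    (κ : ℕ → ℕ) (u : ∀ i : ℕ, V → ZMod (κ i))
    (hκ : ∀ i, 1 ≤ i → i ≤ 2 → IsImprimIndex D (Vset i) (κ i))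
    (hu : ∀ i, 1 ≤ i → i ≤ 2 → IsImprimLabelling D (Vset i) (u i))
    (i : ZMod (κ 1)) (j : ZMod (κ 2)) :
    BAdj D Vset u 1 i j ↔
    (∀ x ∈ Vset 1, u 1 x = i → ∀ y ∈ Vset 2, u 2 y = j →
       ∃ N, 1 ≤ N ∧ ∀ t, N ≤ t → D.HasWalk (2 * t * κ 1 * κ 2) x y) := by
   
  have hne1 := hD.nonempty 1 (by norm_num) (by norm_num)
  have hne2 := hD.nonempty 2 (by norm_num) (by norm_num)
  have hstr1 := hD.strong 1 (by norm_num) (by norm_num)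
  have hstr2 := hD.strong 2 (by norm_num) (by norm_num)
  have hind1 := hκ 1 (by norm_num) (by norm_num)
  have hind2 := hκ 2 (by norm_num) (by norm_num)
  have hu1 := hu 1 (by norm_num) (by norm_num)
  have hu2 := hu 2 (by norm_num) (by norm_num)
  have hcl1 := Digraph'.exists_closed_walk hne1 h1 hstr1
  have hcl2 := Digraph'.exists_closed_walk hne2 h2 hstr2
  have hκ1 : 0 < κ 1 := Digraph'.kappa_pos hind1 hcl1
  have hκ2 : 0 < κ 2 := Digraph'.kappa_pos hind2 hcl2
  constructor
  · rintro ⟨k, l, a, ⟨x', hx', y', hy', hxy, hk, hl⟩, hi, hj⟩ x hxV hxu y hyV hyu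
    have hy'2 : y' ∈ Vset 2 := hy'
    have hl2 : u 2 y' = l := hl
    have hj2 : j = l + (a : ZMod (κ 2)) := hj
    obtain ⟨M₁, hM₁⟩ := Digraph'.exists_walkIn_all_large hstr1 hind1 hκ1 hu1 hxV hx'
    obtain ⟨M₂, hM₂⟩ := Digraph'.exists_walkIn_all_large hstr2 hind2 hκ2 hu2 hy'2 hyV
    set K := κ 1 * κ 2 with hK
    have hKpos : 0 < K := Nat.mul_pos hκ1 hκ2
    set b : ℤ := -1 - a with hb
    set c : ℕ := (b % (K : ℤ)).toNat with hc
    have hcb : (c : ℤ) = b % (K : ℤ) :=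
      Int.toNat_of_nonneg (Int.emod_nonneg b (by positivity))
    set m1 : ℕ := c + M₁ * K with hm1def
    have hm1ge : M₁ ≤ m1 := by
      have := Nat.le_mul_of_pos_right M₁ hKpos
      omega
    have hKdvd : (K : ℤ) ∣ (m1 : ℤ) - b := by
      have h' : (m1 : ℤ) - b = (b % K - b) + M₁ * K := by
        rw [hm1def]; push_cast; rw [hcb]; ring
      rw [h']
      refine dvd_add ⟨-(b / K), ?_⟩ ⟨M₁, by ring⟩
      rw [Int.emod_def]; ring
    have hcast : ∀ κ' : ℕ, κ' ∣ K → ((m1 : ℕ) : ZMod κ') = ((b : ℤ) : ZMod κ') := by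
      intro κ' hκ'
      have hd : (κ' : ℤ) ∣ (m1 : ℤ) - b :=
        dvd_trans (Int.natCast_dvd_natCast.mpr hκ') hKdvd
      have hmod : (m1 : ℤ) ≡ b [ZMOD (κ' : ℤ)] :=
        Int.ModEq.symm (Int.modEq_iff_dvd.mpr hd)
      have h2' := (ZMod.intCast_eq_intCast_iff (m1 : ℤ) b κ').mpr hmod
      exact_mod_cast h2'
    have hres1 : ((m1 : ℕ) : ZMod (κ 1)) = u 1 x' - u 1 x := by
      rw [hcast (κ 1) ⟨κ 2, rfl⟩, hk, hxu, hi, hb]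
      push_cast
      ring
    have hm1κ2 : ((m1 : ℕ) : ZMod (κ 2)) = -1 - (a : ZMod (κ 2)) := by
      rw [hcast (κ 2) ⟨κ 1, mul_comm _ _⟩, hb]
      push_cast
      ring
    refine ⟨M₂ + m1 + 1, by omega, ?_⟩
    intro t ht
    have hbig : m1 + 1 + M₂ ≤ 2 * t * κ 1 * κ 2 := by
      have h1' : t ≤ t * (2 * (κ 1 * κ 2)) := Nat.le_mul_of_pos_right t (by positivity)
      have h2' : t * (2 * (κ 1 * κ 2)) = 2 * t * κ 1 * κ 2 := by ring
      omega
    set m2 : ℕ := 2 * t * κ 1 * κ 2 - (m1 + 1) with hm2def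
    have hnat : m1 + 1 + m2 = 2 * t * κ 1 * κ 2 := by omega
    have hm2ge : M₂ ≤ m2 := by omega
    have hcongr0 := congrArg (Nat.cast : ℕ → ZMod (κ 2)) hnat
    push_cast at hcongr0
    simp only [ZMod.natCast_self, mul_zero] at hcongr0
    have hres2 : ((m2 : ℕ) : ZMod (κ 2)) = u 2 y - u 2 y' := by
      rw [hyu, hj2, hl2]
      linear_combination hcongr0 - hm1κ2
    have hw1 : D.HasWalkIn (Vset 1) m1 x x' := hM₁ m1 hm1ge hres1
    have hw2 : D.HasWalkIn (Vset 2) m2 y' y := hM₂ m2 hm2ge hres2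
    have hfinal := (hw1.hasWalk.append hxy.hasWalk).append hw2.hasWalk
    rwa [show m1 + 1 + m2 = 2 * t * κ 1 * κ 2 from hnat] at hfinal
  · intro h
    obtain ⟨x, hxV, hxu⟩ := Digraph'.fiber_nonempty hne1 h1 hstr1 hind1 hu1 i
    obtain ⟨y, hyV, hyu⟩ := Digraph'.fiber_nonempty hne2 h2 hstr2 hind2 hu2 j
    obtain ⟨N, hN1, hN⟩ := h x hxV hxu y hyV hyu
    obtain ⟨m1, x', y', m2, hmeq, hx', hy', hw1, hxy, hw2⟩ :=
      Digraph'.walk_decomp hD hxV hyV (hN N le_rfl)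
    refine ⟨u 1 x', u 2 y', -((m1 : ℤ) + 1), ⟨x', hx', y', hy', hxy, rfl, rfl⟩, ?_, ?_⟩
    · have hlab := Digraph'.label_of_walkIn hu1 hw1
      rw [← hxu, hlab]
      push_cast
      ring
    · show j = u 2 y' + ((-((m1 : ℤ) + 1) : ℤ) : ZMod (κ 2))
      have hlab2 := Digraph'.label_of_walkIn hu2 hw2
      have hcongr := congrArg (Nat.cast : ℕ → ZMod (κ 2)) hmeq
      push_cast at hcongr
      simp only [ZMod.natCast_self, mul_zero] at hcongr
      rw [← hyu, hlab2]
      push_cast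
      linear_combination -hcongr
end

section
/- Let D be a linearly connected digraph with η ≥ 3 strong components, all nontrivial. Let p and q be indices with p + 2 ≤ q ≤ η, let x ∈ U_i^{(p)} and z ∈ U_k^{(q)}. If D has a directed (x,z)-walk of length s·κ_{p+1}κ_{p+2}···κ_q for some positive integer s, then the vertices (p, i) and (q, k) of the CS-graph PT_D^{(η)} are joined by a path in PT_D^{(η)}. -/
section Aux

open Digraph'

variable {V : Type*} {D : Digraph' V} {η : ℕ} {Vset : ℕ → Set V}

private lemma arc_cases (hD : D.IsLinConn η Vset) {p : ℕ} (hp1 : 1 ≤ p) (hpη : p ≤ η)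
    {x y : V} (hx : x ∈ Vset p) (h : D.Adj x y) :
    y ∈ Vset p ∨ (p + 1 ≤ η ∧ y ∈ Vset (p + 1)) := by
  obtain ⟨i, hi1, hcase⟩ := hD.arcs x y h
  rcases hcase with ⟨hiη, hxi, hyi⟩ | ⟨hiη, hxi, hyi⟩
  · have hip : i = p := hD.disjoint' i p hi1 hiη hp1 hpη x hxi hx
    exact Or.inl (hip ▸ hyi)
  · have hip : i = p := hD.disjoint' i p hi1 (by omega) hp1 hpη x hxi hx
    exact Or.inr ⟨by omega, hip ▸ hyi⟩

private lemma comp_mono (hD : D.IsLinConn η Vset) :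
    ∀ (m a b : ℕ) (x z : V), 1 ≤ a → a ≤ η → 1 ≤ b → b ≤ η →
      x ∈ Vset a → z ∈ Vset b → D.HasWalk m x z → a ≤ b := by
  intro m
  induction m with
  | zero =>
    intro a b x z ha1 haη hb1 hbη hx hz hw
    obtain ⟨f, hf0, hfm, _⟩ := hw
    have hxz : x = z := by rw [← hf0, hfm]
    exact le_of_eq (hD.disjoint' a b ha1 haη hb1 hbη x hx (hxz ▸ hz))
  | succ n ihm =>
    intro a b x z ha1 haη hb1 hbη hx hz hw
    obtain ⟨f, hf0, hfm, hadj⟩ := hw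
    have h01 : D.Adj x (f 1) := hf0 ▸ hadj 0 (Nat.succ_pos n)
    have hwn : D.HasWalk n (f 1) z :=
      ⟨fun t => f (t + 1), rfl, hfm, fun t ht => hadj (t + 1) (by omega)⟩
    rcases arc_cases hD ha1 haη hx h01 with hy | ⟨haη', hy⟩
    · exact ihm a b (f 1) z ha1 haη hb1 hbη hy hz hwn
    · have := ihm (a + 1) b (f 1) z (by omega) haη' hb1 hbη hy hz hwn
      omega

private lemma aux_reach {κ : ℕ → ℕ} {u : ∀ i : ℕ, V → ZMod (κ i)}
    (hD : D.IsLinConn η Vset)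
    (hu : ∀ i, 1 ≤ i → i ≤ η → IsImprimLabelling D (Vset i) (u i)) :
    ∀ (m p q : ℕ) (x z : V) (b : ℤ), 1 ≤ p → p ≤ q → q ≤ η →
      x ∈ Vset p → z ∈ Vset q → D.HasWalk m x z →
      (csGraph D Vset u η).Reachable ⟨p, u p x + (b : ZMod (κ p))⟩
        ⟨q, u q z - (m : ZMod (κ q)) + (b : ZMod (κ q))⟩ := by
  intro m
  induction m using Nat.strong_induction_on with
  | _ m ih =>
  intro p q x z b hp1 hpq hqη hx hz hw
  classical
  obtain ⟨f, hf0, hfm, hadj⟩ := hw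
  have hpη : p ≤ η := le_trans hpq hqη
  by_cases hA : ∀ t ≤ m, f t ∈ Vset p
  · have hlab : ∀ t ≤ m, u p (f t) = u p x + (t : ZMod (κ p)) := by
      intro t
      induction t with
      | zero => intro _; rw [hf0]; simp
      | succ n ihn =>
        intro hn
        have h1 := hu p hp1 hpη (f n) (hA n (by omega)) (f (n + 1)) (hA (n + 1) hn)
          (hadj n (by omega))
        rw [h1, ihn (by omega)]
        push_cast
        ring
    have hpq' : p = q := hD.disjoint' p q hp1 hpη (by omega) hqη z (hfm ▸ hA m le_rfl) hz
    subst hpq'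
    have hz' : u p z = u p x + (m : ZMod (κ p)) := hfm ▸ hlab m le_rfl
    have hfix : u p z - (m : ZMod (κ p)) + (b : ZMod (κ p)) = u p x + (b : ZMod (κ p)) := by
      rw [hz']; ring
    rw [hfix]
  · push_neg at hA
    set t1 := Nat.find hA with ht1def
    have ht1 : t1 ≤ m ∧ f t1 ∉ Vset p := by rw [ht1def]; exact Nat.find_spec hA
    have hmin : ∀ s, s < t1 → f s ∈ Vset p := by
      intro s hs
      by_contra hns
      exact Nat.find_min hA hs ⟨by omega, hns⟩
    have ht1pos : 1 ≤ t1 := by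
      by_contra h
      have h0 : t1 = 0 := by omega
      rw [h0, hf0] at ht1
      exact ht1.2 hx
    set t0 := t1 - 1 with ht0def
    have ht01 : t0 + 1 = t1 := by omega
    have ht0m : t0 < m := by omega
    have hft0 : f t0 ∈ Vset p := hmin t0 (by omega)
    have hadj0 : D.Adj (f t0) (f (t0 + 1)) := hadj t0 ht0m
    rcases arc_cases hD hp1 hpη hft0 hadj0 with hy | ⟨hp1η, hy⟩
    · exact absurd (ht01 ▸ hy) ht1.2
    · have hy1 : f t1 ∈ Vset (p + 1) := ht01 ▸ hy
      have hwt : D.HasWalk (m - t1) (f t1) z := by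
        refine ⟨fun t => f (t1 + t), rfl, ?_, fun t ht => hadj (t1 + t) (by omega)⟩
        show f (t1 + (m - t1)) = z
        rw [show t1 + (m - t1) = m from by omega]
        exact hfm
      have hp1q : p + 1 ≤ q :=
        comp_mono hD (m - t1) (p + 1) q (f t1) z (by omega) hp1η (by omega) hqη hy1 hz hwt
      have hlab : ∀ t ≤ t0, u p (f t) = u p x + (t : ZMod (κ p)) := by
        intro t
        induction t with
        | zero => intro _; rw [hf0]; simp
        | succ n ihn =>
          intro hn
          have h1 := hu p hp1 hpη (f n) (hmin n (by omega)) (f (n + 1)) (hmin (n + 1) (by omega))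
            (hadj n (by omega))
          rw [h1, ihn (by omega)]
          push_cast
          ring
      have hR := ih (m - t1) (by omega) (p + 1) q (f t1) z (b - t1) (by omega) hp1q hqη hy1 hz hwt
      have hedge : (csGraph D Vset u η).Adj ⟨p, u p x + (b : ZMod (κ p))⟩
          ⟨p + 1, u (p + 1) (f t1) + ((b - t1 : ℤ) : ZMod (κ (p + 1)))⟩ := by
        refine ⟨p, hp1, hp1η, u p x + (b : ZMod (κ p)),
          u (p + 1) (f t1) + ((b - t1 : ℤ) : ZMod (κ (p + 1))), ?_, Or.inl ⟨rfl, rfl⟩⟩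
        refine ⟨u p (f t0), u (p + 1) (f t1), b - t1,
          ⟨f t0, hft0, f t1, hy1, ht01 ▸ hadj0, rfl, rfl⟩, ?_, rfl⟩
        rw [hlab t0 le_rfl, ← ht01]
        push_cast
        ring
      have hfix : u q z - ((m - t1 : ℕ) : ZMod (κ q)) + ((b - t1 : ℤ) : ZMod (κ q))
          = u q z - (m : ZMod (κ q)) + (b : ZMod (κ q)) := by
        rw [Nat.cast_sub (by omega : t1 ≤ m)]
        push_cast
        ring
      rw [hfix] at hR
      exact hedge.reachable.trans hR

end Aux

open Digraph' in
/-- if there is an `(x,z)`-walk of length `s·κ_{p+1}···κ_q` with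
`x ∈ U_i^{(p)}`, `z ∈ U_k^{(q)}`, `p + 2 ≤ q ≤ η`, then `(p,i)` and `(q,k)` are joined
by a path in the CS-graph `PT_D^{(η)}`. -/
theorem stmt7 {V : Type*} [Fintype V] (D : Digraph' V) (η : ℕ) (Vset : ℕ → Set V)
    (hD : D.IsLinConn η Vset) (hη : 3 ≤ η)
    (hnt : ∀ i, 1 ≤ i → i ≤ η → ¬ IsTrivialComp (Vset i))
    (κ : ℕ → ℕ) (u : ∀ i : ℕ, V → ZMod (κ i))
    (hκ : ∀ i, 1 ≤ i → i ≤ η → IsImprimIndex D (Vset i) (κ i))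
    (hu : ∀ i, 1 ≤ i → i ≤ η → IsImprimLabelling D (Vset i) (u i))
    (p q : ℕ) (hp : 1 ≤ p) (hpq : p + 2 ≤ q) (hq : q ≤ η)
    (i : ZMod (κ p)) (k : ZMod (κ q)) (x z : V)
    (hx : x ∈ Vset p) (hxi : u p x = i) (hz : z ∈ Vset q) (hzk : u q z = k)
    (s : ℕ) (hs : 1 ≤ s)
    (hw : D.HasWalk (s * ∏ r ∈ Finset.Icc (p + 1) q, κ r) x z) :
    (csGraph D Vset u η).Reachable ⟨p, i⟩ ⟨q, k⟩ := by
  set M := s * ∏ r ∈ Finset.Icc (p + 1) q, κ r with hMdef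
  have hM : κ q ∣ M :=
    Dvd.dvd.mul_left (Finset.dvd_prod_of_mem κ (by simp [Finset.mem_Icc]; omega)) s
  have h0 : (M : ZMod (κ q)) = 0 := by
    obtain ⟨c, hc⟩ := hM
    rw [hc]
    push_cast
    rw [ZMod.natCast_self]
    ring
  have hR := aux_reach hD hu M p q x z 0 hp (by omega) hq hx hz hw
  have e1 : u p x + ((0 : ℤ) : ZMod (κ p)) = i := by rw [hxi]; simp
  have e2 : u q z - (M : ZMod (κ q)) + ((0 : ℤ) : ZMod (κ q)) = k := by
    rw [hzk, h0]; simp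
  rw [e1, e2] at hR
  exact hR
end

section
/- Let D be a linearly connected digraph with η ≥ 2 strong components, all nontrivial. Suppose that κ_η divides κ_p for every p = 1, ..., η−1, and that for every p = 1, ..., η−1 and all (i, j), (i', j') ∈ I(D_{p,p+1}) one has red(i) − red(j) = red(i') − red(j') in ZMod κ_η, where red denotes the natural reduction homomorphisms ZMod κ_p → ZMod κ_η and ZMod κ_{p+1} → ZMod κ_η (well defined since κ_η divides κ_p and κ_{p+1}). Then for every r ∈ {1, ..., η} and all x, y ∈ ZMod κ_r, the following are equivalent: (a) there exists k ∈ ZMod κ_η such that (r, x) and (η, k) are joined by a path in the CS-graph PT_D^{(η)} and (r, y) and (η, k) are joined by a path in PT_D^{(η)}; (b) red(x) = red(y) in ZMod κ_η. -/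
/-- Concatenation of walks inside `S`. -/
theorem Digraph'.HasWalkIn.trans' {V : Type*} {D : Digraph' V} {S : Set V} {m1 m2 : ℕ}
    {a b c : V} (h1 : D.HasWalkIn S m1 a b) (h2 : D.HasWalkIn S m2 b c) :
    D.HasWalkIn S (m1 + m2) a c := by
  obtain ⟨f, hf0, hfm, hfS, hfA⟩ := h1
  obtain ⟨g, hg0, hgm, hgS, hgA⟩ := h2
  refine ⟨fun t => if t < m1 then f t else g (t - m1), ?_, ?_, ?_, ?_⟩
  · by_cases h : 0 < m1
    · simp [h, hf0]
    · have hm1 : m1 = 0 := by omega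
      simp [h, hg0]
      rw [hm1] at hfm
      rw [← hfm, hf0]
  · have h : ¬ (m1 + m2 < m1) := by omega
    simp only [h, if_false]
    have : m1 + m2 - m1 = m2 := by omega
    rw [this, hgm]
  · intro t ht
    by_cases h : t < m1
    · simp only [h, if_true]; exact hfS t (by omega)
    · simp only [h, if_false]; exact hgS (t - m1) (by omega)
  · intro t ht
    by_cases h : t + 1 < m1
    · have h' : t < m1 := by omega
      simp only [h, h', if_true]
      exact hfA t (by omega)
    · by_cases h' : t < m1
      · have heq : t + 1 = m1 := by omega
        simp only [h, h', if_true, if_false]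
        have : t + 1 - m1 = 0 := by omega
        rw [this, hg0, ← hfm, ← heq]
        exact hfA t (by omega)
      · have h'' : ¬ (t + 1 < m1) := by omega
        simp only [h', h'', if_false]
        have : t + 1 - m1 = (t - m1) + 1 := by omega
        rw [this]
        exact hgA (t - m1) (by omega)

open Digraph' in
/-- under the divisibility/difference conditions, two classes `x, y` of
`ZMod κ_r` reach a common vertex of the last part of the CS-graph iff their reductions
mod `κ_η` agree. -/
theorem stmt10 {V : Type*} [Fintype V] (D : Digraph' V) (η : ℕ) (Vset : ℕ → Set V)
    (hD : D.IsLinConn η Vset) (hη : 2 ≤ η)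
    (hnt : ∀ i, 1 ≤ i → i ≤ η → ¬ IsTrivialComp (Vset i))
    (κ : ℕ → ℕ) (u : ∀ i : ℕ, V → ZMod (κ i))
    (hκ : ∀ i, 1 ≤ i → i ≤ η → IsImprimIndex D (Vset i) (κ i))
    (hu : ∀ i, 1 ≤ i → i ≤ η → IsImprimLabelling D (Vset i) (u i))
    (hdvd : ∀ p, 1 ≤ p → p ≤ η → κ η ∣ κ p)
    (hcong : ∀ p, 1 ≤ p → p + 1 ≤ η →
      ∀ (i : ZMod (κ p)) (j : ZMod (κ (p + 1))) (i' : ZMod (κ p)) (j' : ZMod (κ (p + 1))),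
        InI D Vset u p i j → InI D Vset u p i' j' →
        (i.val : ZMod (κ η)) - (j.val : ZMod (κ η)) =
          (i'.val : ZMod (κ η)) - (j'.val : ZMod (κ η)))
    (r : ℕ) (hr1 : 1 ≤ r) (hr2 : r ≤ η) (x y : ZMod (κ r)) :
    (∃ k : ZMod (κ η),
       (csGraph D Vset u η).Reachable ⟨r, x⟩ ⟨η, k⟩ ∧
       (csGraph D Vset u η).Reachable ⟨r, y⟩ ⟨η, k⟩) ↔
    (x.val : ZMod (κ η)) = (y.val : ZMod (κ η)) := by
  classical
  -- κ is positive on [1, η]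
  have hκpos : ∀ p, 1 ≤ p → p ≤ η → 0 < κ p := by
    intro p hp1 hp2
    obtain ⟨a, ha⟩ := hD.nonempty p hp1 hp2
    have hb : ∃ b ∈ Vset p, b ≠ a := by
      by_contra h
      push_neg at h
      exact hnt p hp1 hp2 ⟨a, Set.eq_singleton_iff_unique_mem.mpr ⟨ha, fun b hb => h b hb⟩⟩
    obtain ⟨b, hb, hba⟩ := hb
    obtain ⟨m1, w1⟩ := hD.strong p hp1 hp2 a ha b hb
    obtain ⟨m2, w2⟩ := hD.strong p hp1 hp2 b hb a ha
    have hm1 : 0 < m1 := by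
      rcases Nat.eq_zero_or_pos m1 with h | h
      · obtain ⟨f, hf0, hfm, _, _⟩ := w1
        rw [h] at hfm
        exact absurd (hf0.symm.trans hfm).symm hba
      · exact h
    have hclosed := w1.trans' w2
    have hdv := (hκ p hp1 hp2).1 a (m1 + m2) ha (by omega) hclosed
    exact Nat.pos_of_dvd_of_pos hdv (by omega)
  haveI : NeZero (κ η) := ⟨(hκpos η (by omega) le_rfl).ne'⟩
  -- reduction via cast hom
  have hred : ∀ p (hp1 : 1 ≤ p) (hp2 : p ≤ η) (z : ZMod (κ p)),
      ((z.val : ℕ) : ZMod (κ η)) = ZMod.castHom (hdvd p hp1 hp2) (ZMod (κ η)) z := by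
    intro p hp1 hp2 z
    haveI : NeZero (κ p) := ⟨(hκpos p hp1 hp2).ne'⟩
    rw [ZMod.castHom_apply, ← ZMod.natCast_val]
  -- I(D_{p,p+1}) is nonempty
  have hInonempty : ∀ p, 1 ≤ p → p + 1 ≤ η → ∃ k l, InI D Vset u p k l := by
    intro p hp1 hp2
    obtain ⟨x0, hx0, y0, hy0, hadj⟩ := hD.linked p hp1 hp2
    exact ⟨u p x0, u (p + 1) y0, x0, hx0, y0, hy0, hadj, rfl, rfl⟩
  -- the constant c_p
  obtain ⟨c, hc⟩ : ∃ c : ℕ → ZMod (κ η), ∀ p, 1 ≤ p → p + 1 ≤ η →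
      ∀ k l, InI D Vset u p k l →
        ((k.val : ℕ) : ZMod (κ η)) + 1 - ((l.val : ℕ) : ZMod (κ η)) = c p := by
    refine ⟨fun p => if h : 1 ≤ p ∧ p + 1 ≤ η then
        (((hInonempty p h.1 h.2).choose.val : ℕ) : ZMod (κ η)) + 1 -
        (((hInonempty p h.1 h.2).choose_spec.choose.val : ℕ) : ZMod (κ η)) else 0, ?_⟩
    intro p hp1 hp2 k l hkl
    have h : 1 ≤ p ∧ p + 1 ≤ η := ⟨hp1, hp2⟩
    simp only [dif_pos h]
    have hspec := (hInonempty p h.1 h.2).choose_spec.choose_spec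
    have hdiff := hcong p hp1 hp2 k l _ _ hkl hspec
    linear_combination hdiff
  -- F is constant along edges
  have hF : ∀ a b : (s : ℕ) × ZMod (κ s), (csGraph D Vset u η).Adj a b →
      ((a.2.val : ℕ) : ZMod (κ η)) + ∑ q ∈ Finset.Ico 1 a.1, c q =
      ((b.2.val : ℕ) : ZMod (κ η)) + ∑ q ∈ Finset.Ico 1 b.1, c q := by
    rintro a b ⟨p, hp1, hp2, i, j, ⟨k, l, az, hI, hi, hj⟩, hab⟩
    have hpη : p ≤ η := by omega
    have key : ((i.val : ℕ) : ZMod (κ η)) + ∑ q ∈ Finset.Ico 1 p, c q =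
        ((j.val : ℕ) : ZMod (κ η)) + ∑ q ∈ Finset.Ico 1 (p + 1), c q := by
      have hTp : ∑ q ∈ Finset.Ico 1 (p + 1), c q = (∑ q ∈ Finset.Ico 1 p, c q) + c p :=
        Finset.sum_Ico_succ_top hp1 c
      have hcp := hc p hp1 hp2 k l hI
      have hri : ((i.val : ℕ) : ZMod (κ η)) =
          ((k.val : ℕ) : ZMod (κ η)) + 1 + (az : ZMod (κ η)) := by
        rw [hred p hp1 hpη i, hi, map_add, map_add, map_one, map_intCast,
          ← hred p hp1 hpη k]
      have hrj : ((j.val : ℕ) : ZMod (κ η)) =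
          ((l.val : ℕ) : ZMod (κ η)) + (az : ZMod (κ η)) := by
        rw [hred (p + 1) (by omega) hp2 j, hj, map_add, map_intCast,
          ← hred (p + 1) (by omega) hp2 l]
      rw [hri, hrj, hTp, ← hcp]
      ring
    rcases hab with ⟨rfl, rfl⟩ | ⟨rfl, rfl⟩
    · exact key
    · exact key.symm
  -- F is constant along reachability
  have hwalk : ∀ a b : (s : ℕ) × ZMod (κ s), (csGraph D Vset u η).Reachable a b →
      ((a.2.val : ℕ) : ZMod (κ η)) + ∑ q ∈ Finset.Ico 1 a.1, c q =
      ((b.2.val : ℕ) : ZMod (κ η)) + ∑ q ∈ Finset.Ico 1 b.1, c q := by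
    intro a b h
    obtain ⟨w⟩ := h
    induction w with
    | nil => rfl
    | cons hadj w ih => exact (hF _ _ hadj).trans ih
  -- from any level p one can reach level η
  have hreach : ∀ n p, 1 ≤ p → p + n = η → ∀ i : ZMod (κ p),
      ∃ k : ZMod (κ η), (csGraph D Vset u η).Reachable ⟨p, i⟩ ⟨η, k⟩ := by
    intro n
    induction n with
    | zero =>
      intro p hp1 hpη i
      obtain rfl : p = η := by omega
      exact ⟨i, SimpleGraph.Reachable.refl _⟩
    | succ n ih =>
      intro p hp1 hpη i
      have hp2 : p + 1 ≤ η := by omega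
      haveI : NeZero (κ p) := ⟨(hκpos p hp1 (by omega)).ne'⟩
      obtain ⟨x0, hx0, y0, hy0, hadj⟩ := hD.linked p hp1 hp2
      have hI : InI D Vset u p (u p x0) (u (p + 1) y0) := ⟨x0, hx0, y0, hy0, hadj, rfl, rfl⟩
      set az : ℤ := (((i - u p x0 - 1).val : ℕ) : ℤ) with haz
      have hi : i = u p x0 + 1 + ((az : ℤ) : ZMod (κ p)) := by
        have hcast : ((az : ℤ) : ZMod (κ p)) = i - u p x0 - 1 := by
          rw [haz]
          push_cast
          rw [ZMod.natCast_val, ZMod.cast_id]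
        rw [hcast]; ring
      have hedge : (csGraph D Vset u η).Adj ⟨p, i⟩
          ⟨p + 1, u (p + 1) y0 + ((az : ℤ) : ZMod (κ (p + 1)))⟩ :=
        ⟨p, hp1, hp2, i, u (p + 1) y0 + ((az : ℤ) : ZMod (κ (p + 1))),
          ⟨u p x0, u (p + 1) y0, az, hI, hi, rfl⟩, Or.inl ⟨rfl, rfl⟩⟩
      obtain ⟨k, hk⟩ := ih (p + 1) (by omega) (by omega)
        (u (p + 1) y0 + ((az : ℤ) : ZMod (κ (p + 1))))
      exact ⟨k, hedge.reachable.trans hk⟩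
  constructor
  · rintro ⟨k, h1, h2⟩
    have e1 := hwalk _ _ h1
    have e2 := hwalk _ _ h2
    dsimp only at e1 e2
    have e3 := e1.trans e2.symm
    exact add_right_cancel e3
  · intro hxy
    obtain ⟨kx, hkx⟩ := hreach (η - r) r hr1 (by omega) x
    obtain ⟨ky, hky⟩ := hreach (η - r) r hr1 (by omega) y
    have e1 := hwalk _ _ hkx
    have e2 := hwalk _ _ hky
    dsimp only at e1 e2
    have e3 : ((kx.val : ℕ) : ZMod (κ η)) + ∑ q ∈ Finset.Ico 1 η, c q =
        ((ky.val : ℕ) : ZMod (κ η)) + ∑ q ∈ Finset.Ico 1 η, c q := by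
      rw [← e1, ← e2, hxy]
    have e4 : ((kx.val : ℕ) : ZMod (κ η)) = ((ky.val : ℕ) : ZMod (κ η)) :=
      add_right_cancel e3
    have hkxy : kx = ky := by
      rwa [ZMod.natCast_val, ZMod.cast_id, ZMod.natCast_val, ZMod.cast_id] at e4
    exact ⟨kx, hkx, hkxy ▸ hky⟩
end
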